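/- arXiv:1405.1156 — 7 statements merged into one kernel-verified Lean document; each statement's English description precedes it below -/
import Mathlib

section
/- Fix 0 < p < 1, E > 0 and 0 < B_max ≤ E, and let {E_t}_{t≥0} be the i.i.d. Bernoulli energy arrival process (E_t = E with probability p, E_t = 0 otherwise). The constant-fraction policy g'(t) = p(1−p)^j · B_max, where j = t − max{t' ≤ t : E_{t'} = E} (and g'(t) = 0 before the first arrival), satisfies liminf_{N→∞} 𝔼[(1/N) Σ_{t=1}^N (1/2)·log₂(1 + g'(t))] ≥ Σ_{j=0}^∞ p(1−p)^j · (1/2)·log₂(1 + p(1−p)^j · B_max). -/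
open MeasureTheory ProbabilityTheory Filter

noncomputable section

variable {Ω : Type*} [MeasurableSpace Ω]

/-- The battery process: `B_0 = min(E_0, B_max)` and
`B_{t+1} = min(B_t + E_{t+1} − g(t), B_max)`. -/
def battery (Bmax : ℝ) (Et : ℕ → Ω → ℝ) (g : ℕ → Ω → ℝ) : ℕ → Ω → ℝ
  | 0 => fun ω => min (Et 0 ω) Bmax
  | t + 1 => fun ω => min (battery Bmax Et g t ω + Et (t + 1) ω - g t ω) Bmax

/-- A feasible online policy: each `g(t)` is a measurable function of
`(E_0, …, E_t)` (causality), and `0 ≤ g(t) ≤ B_t` almost surely. -/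
def FeasiblePolicy (μ : Measure Ω) (Bmax : ℝ) (Et : ℕ → Ω → ℝ)
    (g : ℕ → Ω → ℝ) : Prop :=
  (∀ t, ∃ f : (Fin (t + 1) → ℝ) → ℝ, Measurable f ∧
      ∀ ω, g t ω = f fun i : Fin (t + 1) => Et i ω) ∧
  ∀ t, ∀ᵐ ω ∂μ, 0 ≤ g t ω ∧ g t ω ≤ battery Bmax Et g t ω

/-- The long-term average rate
`liminf_{N→∞} 𝔼[(1/N) Σ_{t=1}^N (1/2)·log₂(1 + g(t))]`. -/
def avgRate (μ : Measure Ω) (g : ℕ → Ω → ℝ) : ℝ :=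
  liminf (fun N : ℕ =>
    ∫ ω, (1 / (N : ℝ)) * ∑ t ∈ Finset.Icc 1 N, (1 / 2) * Real.logb 2 (1 + g t ω) ∂μ)
    atTop

/-- `{E_t}` is an i.i.d. Bernoulli energy arrival process: the `E_t` are measurable,
independent, and each `E_t` equals `E` with probability `p` and `0` with
probability `1 − p`. -/
def IsBernoulliArrival (μ : Measure Ω) (p E : ℝ) (Et : ℕ → Ω → ℝ) : Prop :=
  (∀ t, Measurable (Et t)) ∧
  iIndepFun Et μ ∧
  ∀ t, μ.map (Et t) =
    ENNReal.ofReal p • Measure.dirac E + ENNReal.ofReal (1 - p) • Measure.dirac 0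

open Classical in
/-- The constant-fraction policy: `g'(t) = p(1−p)^j · A`, where
`j = t − max{t' ≤ t : E_{t'} = E}` is the number of time steps since the most
recent energy arrival, and `g'(t) = 0` before the first arrival. -/
def constantFractionPolicy (p A E : ℝ) (Et : ℕ → Ω → ℝ) (t : ℕ) (ω : Ω) : ℝ :=
  if ∃ t' ≤ t, Et t' ω = E then
    p * (1 - p) ^ (t - sSup {t' | t' ≤ t ∧ Et t' ω = E}) * A
  else 0

end


/-- For `0 < p < 1`, `E > 0`, `0 < B_max ≤ E` and an i.i.d. Bernoulli
energy arrival process, the constant-fraction policy `g'(t) = p(1−p)^j·B_max`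
satisfies
`liminf_{N→∞} 𝔼[(1/N) Σ_{t=1}^N (1/2)·log₂(1 + g'(t))]
  ≥ Σ_{j=0}^∞ p(1−p)^j·(1/2)·log₂(1 + p(1−p)^j·B_max)`. -/
theorem constant_fraction_policy_rate_lower_bound
    {Ω : Type*} [MeasurableSpace Ω] (μ : Measure Ω) [IsProbabilityMeasure μ]
    (p E Bmax : ℝ) (hp0 : 0 < p) (hp1 : p < 1) (hE : 0 < E)
    (hB0 : 0 < Bmax) (hBE : Bmax ≤ E)
    (Et : ℕ → Ω → ℝ) (hEt : IsBernoulliArrival μ p E Et) :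
    avgRate μ (constantFractionPolicy p Bmax E Et) ≥
      ∑' j : ℕ, p * (1 - p) ^ j *
        ((1 / 2) * Real.logb 2 (1 + p * (1 - p) ^ j * Bmax)) := by
  classical
  obtain ⟨hmeas, hindep, hmap⟩ := hEt
  have h1p : (0:ℝ) ≤ 1 - p := by linarith
  have h1p' : (1:ℝ) - p < 1 := by linarith
  have hEne : E ≠ 0 := ne_of_gt hE
  set r : ℕ → ℝ := fun j => (1/2) * Real.logb 2 (1 + p*(1-p)^j*Bmax) with hrdef
  set f : ℕ → ℝ := fun j => p*(1-p)^j * r j with hfdef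
  have hval_nonneg : ∀ j : ℕ, 0 ≤ p*(1-p)^j*Bmax := by
    intro j; positivity
  have hr_nonneg : ∀ j, 0 ≤ r j := by
    intro j
    have h1 : (1:ℝ) ≤ 1 + p*(1-p)^j*Bmax := by linarith [hval_nonneg j]
    exact mul_nonneg (by norm_num) (Real.logb_nonneg one_lt_two h1)
  have hf_nonneg : ∀ j, 0 ≤ f j := by
    intro j; exact mul_nonneg (by positivity) (hr_nonneg j)
  have hr_le : ∀ j, r j ≤ r 0 := by
    intro j
    have hle : p*(1-p)^j*Bmax ≤ p*(1-p)^0*Bmax := by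
      have h2 : (1-p)^j ≤ 1 := pow_le_one₀ h1p (by linarith)
      calc p*(1-p)^j*Bmax ≤ p*1*Bmax :=
            mul_le_mul_of_nonneg_right (mul_le_mul_of_nonneg_left h2 hp0.le) hB0.le
        _ = p*(1-p)^0*Bmax := by norm_num
    refine mul_le_mul_of_nonneg_left ?_ (by norm_num)
    exact Real.logb_le_logb_of_le one_lt_two
      (by linarith [hval_nonneg j]) (by linarith)
  have hsum : Summable f := by
    have hgeo : Summable (fun j : ℕ => (p * r 0) * (1-p)^j) :=
      (summable_geometric_of_lt_one h1p h1p').mul_left _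
    refine Summable.of_nonneg_of_le hf_nonneg (fun j => ?_) hgeo
    calc p*(1-p)^j * r j ≤ p*(1-p)^j * r 0 :=
          mul_le_mul_of_nonneg_left (hr_le j) (by positivity)
      _ = (p * r 0) * (1-p)^j := by ring
  -- the events
  set A : ℕ → ℕ → Set Ω := fun t j =>
    ⋂ s ∈ Finset.Icc (t-j) t, Et s ⁻¹' (if s = t - j then ({E} : Set ℝ) else {E}ᶜ)
    with hAdef
  have hAmeas : ∀ t j, MeasurableSet (A t j) := by
    intro t j
    refine Finset.measurableSet_biInter _ (fun s _ => ?_)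
    by_cases h : s = t - j
    · simpa [h] using (hmeas s) (measurableSet_singleton E)
    · simpa [h] using (hmeas s) (measurableSet_singleton E).compl
  have hmemA : ∀ t j ω, ω ∈ A t j ↔
      (Et (t-j) ω = E ∧ ∀ s, t - j < s → s ≤ t → Et s ω ≠ E) := by
    intro t j ω
    simp only [hAdef, Set.mem_iInter, Set.mem_preimage, Finset.mem_Icc]
    constructor
    · intro h
      refine ⟨?_, ?_⟩
      · have := h (t-j) ⟨le_rfl, Nat.sub_le t j⟩
        simpa using this
      · intro s hs1 hs2 hsE
        have := h s ⟨le_of_lt hs1, hs2⟩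
        rw [if_neg (by omega)] at this
        exact this hsE
    · rintro ⟨h1, h2⟩ s ⟨hs1, hs2⟩
      by_cases h : s = t - j
      · subst h; simpa using h1
      · rw [if_neg h]
        exact h2 s (by omega) hs2
  -- single-coordinate probabilities
  have hsingle : ∀ s : ℕ, μ (Et s ⁻¹' {E}) = ENNReal.ofReal p := by
    intro s
    rw [← Measure.map_apply (hmeas s) (measurableSet_singleton E), hmap s]
    have h0E : (0:ℝ) ≠ E := Ne.symm hEne
    rw [Measure.add_apply, Measure.smul_apply, Measure.smul_apply,
      Measure.dirac_apply, Measure.dirac_apply]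
    simp [Set.indicator_apply, h0E]
  have hsingle' : ∀ s : ℕ, μ (Et s ⁻¹' {E}ᶜ) = ENNReal.ofReal (1-p) := by
    intro s
    have h0E : (0:ℝ) ≠ E := Ne.symm hEne
    rw [← Measure.map_apply (hmeas s) (measurableSet_singleton E).compl, hmap s]
    rw [Measure.add_apply, Measure.smul_apply, Measure.smul_apply,
      Measure.dirac_apply, Measure.dirac_apply]
    simp [Set.indicator_apply, h0E]
  -- measure of the events
  have hAmeasure : ∀ t j, j ≤ t → (μ (A t j)).toReal = p * (1-p)^j := by
    intro t j hjt
    have key : μ (A t j) = ∏ s ∈ Finset.Icc (t-j) t,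
        μ (Et s ⁻¹' (if s = t - j then ({E} : Set ℝ) else {E}ᶜ)) := by
      refine hindep.measure_inter_preimage_eq_mul (Finset.Icc (t-j) t)
        (sets := fun s => if s = t - j then ({E} : Set ℝ) else {E}ᶜ) ?_
      intro i _
      by_cases h : i = t - j
      · simp [h, measurableSet_singleton]
      · simp [h, (measurableSet_singleton E).compl]
    have hmemIcc : t - j ∈ Finset.Icc (t-j) t := by
      simp [Nat.sub_le]
    have hprod : ∏ s ∈ Finset.Icc (t-j) t,
        μ (Et s ⁻¹' (if s = t - j then ({E} : Set ℝ) else {E}ᶜ))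
        = ENNReal.ofReal p * (ENNReal.ofReal (1-p))^j := by
      rw [← Finset.mul_prod_erase _ _ hmemIcc]
      have h1 : μ (Et (t-j) ⁻¹' (if t - j = t - j then ({E} : Set ℝ) else {E}ᶜ))
          = ENNReal.ofReal p := by simp [hsingle]
      have h2 : ∀ s ∈ (Finset.Icc (t-j) t).erase (t-j),
          μ (Et s ⁻¹' (if s = t - j then ({E} : Set ℝ) else {E}ᶜ))
          = ENNReal.ofReal (1-p) := by
        intro s hs
        have hne : s ≠ t - j := Finset.ne_of_mem_erase hs
        rw [if_neg hne]
        exact hsingle' s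
      rw [h1, Finset.prod_congr rfl h2, Finset.prod_const]
      have hcard : ((Finset.Icc (t-j) t).erase (t-j)).card = j := by
        rw [Finset.card_erase_of_mem hmemIcc, Nat.card_Icc]
        omega
      rw [hcard]
    rw [key, hprod]
    rw [ENNReal.toReal_mul, ENNReal.toReal_pow, ENNReal.toReal_ofReal hp0.le,
      ENNReal.toReal_ofReal h1p]
  -- pointwise identity
  have hpoint : ∀ t ω, (1/2) * Real.logb 2 (1 + constantFractionPolicy p Bmax E Et t ω)
      = ∑ j ∈ Finset.range (t+1), (A t j).indicator (fun _ => r j) ω := by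
    intro t ω
    by_cases h : ∃ t' ≤ t, Et t' ω = E
    · -- there was an arrival
      set M := sSup {t' | t' ≤ t ∧ Et t' ω = E} with hMdef
      have hbdd : BddAbove {t' | t' ≤ t ∧ Et t' ω = E} := ⟨t, fun x hx => hx.1⟩
      have hne : {t' | t' ≤ t ∧ Et t' ω = E}.Nonempty := by
        obtain ⟨t', ht', hE'⟩ := h; exact ⟨t', ht', hE'⟩
      have hMmem : M ∈ {t' | t' ≤ t ∧ Et t' ω = E} := Nat.sSup_mem hne hbdd
      obtain ⟨hMt, hME⟩ := hMmem
      have hmax : ∀ s, M < s → s ≤ t → Et s ω ≠ E := by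
        intro s hMs hst hsE
        have : s ≤ M := le_csSup hbdd ⟨hst, hsE⟩
        omega
      have hLHS : constantFractionPolicy p Bmax E Et t ω = p * (1-p)^(t - M) * Bmax := by
        rw [constantFractionPolicy, if_pos h]
      have hmemtM : ω ∈ A t (t - M) := by
        rw [hmemA]
        have htM : t - (t - M) = M := by omega
        rw [htM]
        exact ⟨hME, hmax⟩
      have hnotmem : ∀ j ∈ Finset.range (t+1), j ≠ t - M → ω ∉ A t j := by
        intro j hj hne' hmem
        rw [hmemA] at hmem
        obtain ⟨h1, h2⟩ := hmem
        have hjt : j ≤ t := by simpa [Nat.lt_succ_iff] using hj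
        have htjM : t - j ≤ M := le_csSup hbdd ⟨Nat.sub_le t j, h1⟩
        have : t - j = M := by
          by_contra hcon
          exact h2 M (by omega) hMt hME
        omega
      rw [Finset.sum_eq_single_of_mem (t - M)
        (Finset.mem_range.mpr (by omega))]
      · rw [Set.indicator_of_mem hmemtM, hLHS]
      · intro j hj hne'
        rw [Set.indicator_of_notMem (hnotmem j hj hne')]
    · -- no arrival yet
      have hLHS : constantFractionPolicy p Bmax E Et t ω = 0 := by
        rw [constantFractionPolicy, if_neg h]
      rw [hLHS]
      push_neg at h
      have : ∀ j ∈ Finset.range (t+1), (A t j).indicator (fun _ => r j) ω = 0 := by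
        intro j hj
        refine Set.indicator_of_notMem ?_ _
        rw [hmemA]
        rintro ⟨h1, _⟩
        exact h (t - j) (Nat.sub_le t j) h1
      rw [Finset.sum_eq_zero this]
      simp
  -- integrability of each time-slot rate
  have hintegrable : ∀ t, Integrable
      (fun ω => (1/2) * Real.logb 2 (1 + constantFractionPolicy p Bmax E Et t ω)) μ := by
    intro t
    have : (fun ω => (1/2) * Real.logb 2 (1 + constantFractionPolicy p Bmax E Et t ω))
        = fun ω => ∑ j ∈ Finset.range (t+1), (A t j).indicator (fun _ => r j) ω := by
      funext ω; exact hpoint t ω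
    rw [this]
    exact integrable_finset_sum _ (fun j _ =>
      (integrable_const (r j)).indicator (hAmeas t j))
  -- expected rate at each time slot
  have hint : ∀ t : ℕ, 1 ≤ t →
      ∫ ω, (1/2) * Real.logb 2 (1 + constantFractionPolicy p Bmax E Et t ω) ∂μ
      = ∑ j ∈ Finset.range (t+1), f j := by
    intro t _
    have heq : (fun ω => (1/2) * Real.logb 2 (1 + constantFractionPolicy p Bmax E Et t ω))
        = fun ω => ∑ j ∈ Finset.range (t+1), (A t j).indicator (fun _ => r j) ω := by
      funext ω; exact hpoint t ω
    rw [heq, integral_finset_sum _ (fun j _ =>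
      (integrable_const (r j)).indicator (hAmeas t j))]
    refine Finset.sum_congr rfl (fun j hj => ?_)
    rw [integral_indicator_const _ (hAmeas t j), smul_eq_mul, measureReal_def,
      hAmeasure t j (by simpa [Nat.lt_succ_iff] using hj)]
  -- the sequence of expectations
  have hNval : ∀ N : ℕ,
      ∫ ω, (1 / (N : ℝ)) * ∑ t ∈ Finset.Icc 1 N,
        (1/2) * Real.logb 2 (1 + constantFractionPolicy p Bmax E Et t ω) ∂μ
      = (1 / (N:ℝ)) * ∑ t ∈ Finset.Icc 1 N, ∑ j ∈ Finset.range (t+1), f j := by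
    intro N
    rw [integral_const_mul, integral_finset_sum _ (fun t _ => hintegrable t)]
    congr 1
    refine Finset.sum_congr rfl (fun t ht => ?_)
    exact hint t (Finset.mem_Icc.mp ht).1
  -- convergence
  set S := ∑' j : ℕ, f j with hSdef
  have htendsto2 : Tendsto (fun i : ℕ => ∑ j ∈ Finset.range (i+2), f j) atTop (nhds S) :=
    hsum.hasSum.tendsto_sum_nat.comp (tendsto_add_atTop_nat 2)
  have hcesaro : Tendsto (fun N : ℕ => (1 / (N:ℝ)) * ∑ t ∈ Finset.Icc 1 N,
      ∑ j ∈ Finset.range (t+1), f j) atTop (nhds S) := by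
    have hc := Filter.Tendsto.cesaro htendsto2
    refine hc.congr (fun N => ?_)
    rw [one_div]
    congr 1
    rw [← Finset.Ico_add_one_right_eq_Icc, Finset.sum_Ico_eq_sum_range,
      show N + 1 - 1 = N from rfl]
    refine Finset.sum_congr rfl (fun i _ => ?_)
    rw [show 1 + i + 1 = i + 2 from by omega]
  have hlim : Tendsto (fun N : ℕ =>
      ∫ ω, (1 / (N : ℝ)) * ∑ t ∈ Finset.Icc 1 N,
        (1/2) * Real.logb 2 (1 + constantFractionPolicy p Bmax E Et t ω) ∂μ)
      atTop (nhds S) := by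
    refine hcesaro.congr (fun N => (hNval N).symm)
  have : avgRate μ (constantFractionPolicy p Bmax E Et) = S := by
    rw [avgRate]
    exact hlim.liminf_eq
  rw [this]
end

section
/- For every real p with 0 < p < 1 and every real B > 0, (1/2)·log₂(1 + pB) − Σ_{j=0}^∞ p(1−p)^j · (1/2)·log₂(1 + p(1−p)^j · B) ≤ 0.973. -/
open Real

/-- For every real `p` with `0 < p < 1` and every real `B > 0`,
`(1/2)·log₂(1 + pB) − Σ_{j=0}^∞ p(1−p)^j · (1/2)·log₂(1 + p(1−p)^j·B) ≤ 0.973`. -/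
theorem constant_gap_bound (p B : ℝ) (hp0 : 0 < p) (hp1 : p < 1) (hB : 0 < B) :
    (1 / 2) * Real.logb 2 (1 + p * B) -
      ∑' j : ℕ, p * (1 - p) ^ j * ((1 / 2) * Real.logb 2 (1 + p * (1 - p) ^ j * B)) ≤
      0.973 := by
  set q : ℝ := 1 - p with hqdef
  have hq0 : 0 < q := by simp only [hqdef]; linarith
  have hq1 : q < 1 := by simp only [hqdef]; linarith
  have hqj : ∀ j : ℕ, 0 < q ^ j := fun j => pow_pos hq0 j
  have hqj1 : ∀ j : ℕ, q ^ j ≤ 1 := fun j => pow_le_one₀ hq0.le hq1.le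
  have h1 : ∀ j : ℕ, 0 < 1 + p * q ^ j * B := fun j => by
    have := hqj j; positivity
  have h1' : 0 < 1 + p * B := by positivity
  set C : ℝ := (1 / 2) * Real.logb 2 (1 + p * B) with hC
  have hCnn : 0 ≤ C := by
    have : (0:ℝ) ≤ Real.logb 2 (1 + p * B) := Real.logb_nonneg one_lt_two (by nlinarith)
    positivity
  set a : ℕ → ℝ := fun j => p * q ^ j * C with ha
  set g : ℕ → ℝ := fun j => p * q ^ j * ((1 / 2) * Real.logb 2 (1 + p * q ^ j * B)) with hg
  have hgnn : ∀ j, 0 ≤ g j := fun j => by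
    have : (0:ℝ) ≤ Real.logb 2 (1 + p * q ^ j * B) :=
      Real.logb_nonneg one_lt_two (by nlinarith [hqj j, mul_pos (mul_pos hp0 (hqj j)) hB])
    have := (hqj j).le
    positivity
  have hgle : ∀ j, g j ≤ a j := fun j => by
    have hlog : Real.logb 2 (1 + p * q ^ j * B) ≤ Real.logb 2 (1 + p * B) := by
      apply Real.logb_le_logb_of_le one_lt_two (h1 j)
      nlinarith [hqj1 j, mul_pos hp0 hB]
    have := (hqj j).le
    simp only [ha, hg, hC]
    nlinarith [mul_pos hp0 (hqj j)]
  have hsa : Summable a := by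
    apply Summable.mul_right
    exact (summable_geometric_of_lt_one hq0.le hq1).mul_left p
  have hsg : Summable g := Summable.of_nonneg_of_le hgnn hgle hsa
  -- sum of a
  have hsuma : ∑' j : ℕ, a j = C := by
    simp only [ha, mul_assoc]
    rw [tsum_mul_left, tsum_mul_right, tsum_geometric_of_lt_one hq0.le hq1]
    have : (1:ℝ) - q = p := by simp [hqdef]
    rw [this]
    field_simp
  -- majorant
  set L : ℝ := Real.logb 2 (1 / q) with hL
  have hLnn : 0 ≤ L := Real.logb_nonneg one_lt_two (by rw [le_div_iff₀ hq0]; linarith)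
  set M : ℕ → ℝ := fun j => (p / 2 * L) * ((j : ℝ) * q ^ j) with hM
  have hsM : Summable M := by
    apply Summable.mul_left
    have := summable_pow_mul_geometric_of_norm_lt_one (R := ℝ) 1
      (r := q) (by rw [Real.norm_eq_abs, abs_of_pos hq0]; exact hq1)
    simpa using this
  have hkey : ∀ j : ℕ, a j - g j ≤ M j := by
    intro j
    have hratio : 1 + p * B ≤ (1 / q) ^ j * (1 + p * q ^ j * B) := by
      rw [one_div, inv_pow, ← div_eq_inv_mul, le_div_iff₀ (hqj j)]
      nlinarith [hqj1 j, mul_pos hp0 hB, hqj j]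
    have hlog : Real.logb 2 (1 + p * B) - Real.logb 2 (1 + p * q ^ j * B)
        ≤ (j : ℝ) * L := by
      rw [← Real.logb_div (ne_of_gt h1') (ne_of_gt (h1 j)), hL, ← Real.logb_pow]
      apply Real.logb_le_logb_of_le one_lt_two (by positivity)
      rw [div_le_iff₀ (h1 j)]
      exact hratio
    have hpq : 0 ≤ p * q ^ j := le_of_lt (mul_pos hp0 (hqj j))
    simp only [ha, hg, hM, hC]
    calc p * q ^ j * ((1/2) * Real.logb 2 (1 + p * B)) -
          p * q ^ j * ((1/2) * Real.logb 2 (1 + p * q ^ j * B))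
        = p * q ^ j * (1/2) * (Real.logb 2 (1 + p * B) - Real.logb 2 (1 + p * q ^ j * B)) := by
          ring
      _ ≤ p * q ^ j * (1/2) * ((j : ℝ) * L) := by
          apply mul_le_mul_of_nonneg_left hlog (by positivity)
      _ = (p / 2 * L) * ((j : ℝ) * q ^ j) := by ring
  have hgap : C - ∑' j, g j = ∑' j, (a j - g j) := by
    rw [Summable.tsum_sub hsa hsg, hsuma]
  have hbound : C - ∑' j, g j ≤ ∑' j, M j := by
    rw [hgap]
    exact Summable.tsum_le_tsum hkey (hsa.sub hsg) hsM
  have hsumM : ∑' j, M j = (p / 2 * L) * (q / (1 - q) ^ 2) := by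
    simp only [hM]
    rw [tsum_mul_left, tsum_coe_mul_geometric_of_norm_lt_one
      (by rw [Real.norm_eq_abs, abs_of_pos hq0]; exact hq1)]
  -- final numeric bound: (p/2 * L) * (q / p^2) ≤ 1/(2 log 2) ≤ 0.973
  have hp' : (1:ℝ) - q = p := by simp [hqdef]
  have hLle : L ≤ (p / q) / Real.log 2 := by
    rw [hL, Real.logb, div_le_div_iff_of_pos_right (Real.log_pos one_lt_two)]
    have := Real.log_le_sub_one_of_pos (show (0:ℝ) < 1 / q by positivity)
    calc Real.log (1 / q) ≤ 1 / q - 1 := this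
      _ = p / q := by field_simp; linarith [hp'.symm]
  have hfinal : (p / 2 * L) * (q / (1 - q) ^ 2) ≤ 0.973 := by
    rw [hp']
    have h2 : (p / 2 * L) * (q / p ^ 2) ≤ (p / 2 * ((p / q) / Real.log 2)) * (q / p ^ 2) := by
      apply mul_le_mul_of_nonneg_right (mul_le_mul_of_nonneg_left hLle (by positivity))
      positivity
    have h3 : (p / 2 * ((p / q) / Real.log 2)) * (q / p ^ 2) = 1 / (2 * Real.log 2) := by
      field_simp
    rw [h3] at h2
    have hlog2 : (0.6931471803 : ℝ) < Real.log 2 := Real.log_two_gt_d9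
    have : (1:ℝ) / (2 * Real.log 2) ≤ 0.973 := by
      rw [div_le_iff₀ (by linarith)]
      nlinarith
    linarith
  calc C - ∑' j, g j ≤ ∑' j, M j := hbound
    _ = (p / 2 * L) * (q / (1 - q) ^ 2) := hsumM
    _ ≤ 0.973 := hfinal
end

section
/- For every real p with 0 < p < 1 and every real B > 0, (1/2)·log₂(1 + pB) − Σ_{j=0}^∞ p(1−p)^j · (1/2)·log₂(1 + p(1−p)^j · B) ≤ (1/2)·log₂(1 + 1/(pB)) + ((1−p)/(2p))·log₂(1/(1−p)). -/
/-- For every real `p` with `0 < p < 1` and every real `B > 0`,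
`(1/2)·log₂(1 + pB) − Σ_{j=0}^∞ p(1−p)^j·(1/2)·log₂(1 + p(1−p)^j·B)
  ≤ (1/2)·log₂(1 + 1/(pB)) + ((1−p)/(2p))·log₂(1/(1−p))`. -/
theorem gap_upper_bound (p B : ℝ) (hp0 : 0 < p) (hp1 : p < 1) (hB : 0 < B) :
    (1 / 2) * Real.logb 2 (1 + p * B) -
      ∑' j : ℕ, p * (1 - p) ^ j * ((1 / 2) * Real.logb 2 (1 + p * (1 - p) ^ j * B)) ≤
      (1 / 2) * Real.logb 2 (1 + 1 / (p * B)) +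
        ((1 - p) / (2 * p)) * Real.logb 2 (1 / (1 - p)) := by
  set q : ℝ := 1 - p with hq
  have hq0 : 0 < q := by simp [hq]; linarith
  have hq1 : q < 1 := by simp [hq]; linarith
  have hpB : 0 < p * B := mul_pos hp0 hB
  have hb2 : (1:ℝ) < 2 := one_lt_two
  -- per-term positivity
  have hpos : ∀ j : ℕ, 0 < p * q ^ j * B := fun j =>
    mul_pos (mul_pos hp0 (pow_pos hq0 j)) hB
  -- summability of the main series
  have hsum1 : Summable (fun j : ℕ => p * q ^ j * ((1 / 2) * Real.logb 2 (1 + p * q ^ j * B))) := by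
    apply Summable.of_nonneg_of_le
    · intro j
      have : (0:ℝ) ≤ Real.logb 2 (1 + p * q ^ j * B) :=
        Real.logb_nonneg hb2 (by nlinarith [hpos j])
      positivity
    · intro j
      have h1 : Real.logb 2 (1 + p * q ^ j * B) ≤ Real.logb 2 (1 + p * B) := by
        apply Real.logb_le_logb_of_le hb2 (by nlinarith [hpos j])
        have : q ^ j ≤ 1 := pow_le_one₀ hq0.le hq1.le
        nlinarith
      calc p * q ^ j * ((1 / 2) * Real.logb 2 (1 + p * q ^ j * B))
          ≤ p * q ^ j * ((1 / 2) * Real.logb 2 (1 + p * B)) := by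
            apply mul_le_mul_of_nonneg_left _ (by positivity)
            linarith
        _ = (p * ((1 / 2) * Real.logb 2 (1 + p * B))) * q ^ j := by ring
    · exact (summable_geometric_of_lt_one hq0.le hq1).mul_left _
  -- summability of lower bound series
  have hsum2 : Summable (fun j : ℕ => p * q ^ j * ((1 / 2) * (Real.logb 2 (p * B) + j * Real.logb 2 q))) := by
    have hA : Summable (fun j : ℕ => (p * ((1/2) * Real.logb 2 (p * B))) * q ^ j) :=
      (summable_geometric_of_lt_one hq0.le hq1).mul_left _
    have hB2 : Summable (fun j : ℕ => (p * ((1/2) * Real.logb 2 q)) * ((j : ℝ) * q ^ j)) := by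
      apply Summable.mul_left
      have := summable_pow_mul_geometric_of_norm_lt_one (R := ℝ) 1 (r := q)
        (by rw [Real.norm_eq_abs, abs_of_pos hq0]; exact hq1)
      simpa using this
    have := hA.add hB2
    convert this using 2 with j
    ring
  -- termwise lower bound
  have hterm : ∀ j : ℕ, p * q ^ j * ((1 / 2) * (Real.logb 2 (p * B) + j * Real.logb 2 q))
      ≤ p * q ^ j * ((1 / 2) * Real.logb 2 (1 + p * q ^ j * B)) := by
    intro j
    apply mul_le_mul_of_nonneg_left _ (by positivity)
    apply mul_le_mul_of_nonneg_left _ (by norm_num)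
    have heq : Real.logb 2 (p * B) + j * Real.logb 2 q = Real.logb 2 (p * q ^ j * B) := by
      rw [show p * q ^ j * B = (p * B) * q ^ j by ring,
        Real.logb_mul (ne_of_gt hpB) (ne_of_gt (pow_pos hq0 j)), Real.logb_pow]
    rw [heq]
    exact Real.logb_le_logb_of_le hb2 (hpos j) (by linarith)
  have hlb : ∑' j : ℕ, p * q ^ j * ((1 / 2) * (Real.logb 2 (p * B) + j * Real.logb 2 q))
      ≤ ∑' j : ℕ, p * q ^ j * ((1 / 2) * Real.logb 2 (1 + p * q ^ j * B)) :=
    Summable.tsum_le_tsum hterm hsum2 hsum1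
  -- compute the lower-bound tsum
  have hg : (∑' j : ℕ, (q:ℝ) ^ j) = p⁻¹ := by
    rw [tsum_geometric_of_lt_one hq0.le hq1]; simp [hq]
  have hg2 : (∑' j : ℕ, (j : ℝ) * q ^ j) = q / p ^ 2 := by
    rw [tsum_coe_mul_geometric_of_norm_lt_one
      (by rw [Real.norm_eq_abs, abs_of_pos hq0]; exact hq1)]
    simp [hq]
  have hcomp : ∑' j : ℕ, p * q ^ j * ((1 / 2) * (Real.logb 2 (p * B) + j * Real.logb 2 q))
      = (1/2) * Real.logb 2 (p * B) + (q / (2 * p)) * Real.logb 2 q := by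
    have h1 : Summable (fun j : ℕ => (p * ((1/2) * Real.logb 2 (p * B))) * q ^ j) :=
      (summable_geometric_of_lt_one hq0.le hq1).mul_left _
    have h2 : Summable (fun j : ℕ => (p * ((1/2) * Real.logb 2 q)) * ((j : ℝ) * q ^ j)) := by
      apply Summable.mul_left
      have := summable_pow_mul_geometric_of_norm_lt_one (R := ℝ) 1 (r := q)
        (by rw [Real.norm_eq_abs, abs_of_pos hq0]; exact hq1)
      simpa using this
    have hrw : (fun j : ℕ => p * q ^ j * ((1 / 2) * (Real.logb 2 (p * B) + j * Real.logb 2 q)))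
        = fun j : ℕ => (p * ((1/2) * Real.logb 2 (p * B))) * q ^ j
          + (p * ((1/2) * Real.logb 2 q)) * ((j : ℝ) * q ^ j) := by
      funext j; ring
    rw [hrw, Summable.tsum_add h1 h2, tsum_mul_left, tsum_mul_left, hg, hg2]
    field_simp
  -- final algebra
  have hfin : (1 / 2) * Real.logb 2 (1 + p * B)
      - ((1/2) * Real.logb 2 (p * B) + (q / (2 * p)) * Real.logb 2 q)
      = (1 / 2) * Real.logb 2 (1 + 1 / (p * B)) + ((1 - p) / (2 * p)) * Real.logb 2 (1 / (1 - p)) := by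
    have hd : Real.logb 2 (1 + p * B) - Real.logb 2 (p * B) = Real.logb 2 (1 + 1 / (p * B)) := by
      rw [← Real.logb_div (by nlinarith) (ne_of_gt hpB)]
      congr 1
      field_simp; ring
    have hinv : Real.logb 2 (1 / (1 - p)) = - Real.logb 2 q := by
      rw [one_div, Real.logb_inv, hq]
    rw [hinv]
    rw [← hq]
    linarith [hd]
  linarith [hlb, hcomp ▸ hlb]
end

section
/- For every real p with 0 < p < 1 and every real B > 0, define C_ub(B, p) = (1/2)·log₂(1 + pB) and C_lb(B, p) = max(0, Σ_{j=0}^∞ p(1−p)^j · (1/2)·log₂(1 + p(1−p)^j · B) − 1.04 − H(p)), where H(p) = −p·log₂ p − (1−p)·log₂(1−p) is the binary entropy function. Then C_ub(B, p) − C_lb(B, p) ≤ 2.58. -/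
open Real

/-- Padé-type upper bound for `-log x` on `(0,1]`:
`-log x ≤ 1/(4x) + 27/(4(x+2)) - 5/2`. -/
private lemma pade_log {x : ℝ} (hx0 : 0 < x) (hx1 : x ≤ 1) :
    -Real.log x ≤ 1 / (4 * x) + 27 / (4 * (x + 2)) - 5 / 2 := by
  have hf : ∀ y : ℝ, 0 < y →
      HasDerivAt (fun y : ℝ => Real.log y + (1 / (4 * y) + 27 / (4 * (y + 2)) - 5 / 2))
        (y⁻¹ + (-4 / (4 * y) ^ 2 + 27 * (-4 / (4 * (y + 2)) ^ 2))) y := by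
    intro y hy
    have h4y : (4 : ℝ) * y ≠ 0 := by positivity
    have h4y2 : (4 : ℝ) * (y + 2) ≠ 0 := by positivity
    have d1 : HasDerivAt (fun y : ℝ => 1 / (4 * y)) (-4 / (4 * y) ^ 2) y := by
      have h : HasDerivAt (fun y : ℝ => 4 * y) 4 y := by
        simpa using (hasDerivAt_id y).const_mul (4 : ℝ)
      have := h.inv h4y; simp only [one_div]; exact this
    have d2 : HasDerivAt (fun y : ℝ => 27 / (4 * (y + 2))) (27 * (-4 / (4 * (y + 2)) ^ 2)) y := by
      have h : HasDerivAt (fun y : ℝ => 4 * (y + 2)) 4 y := by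
        simpa using ((hasDerivAt_id y).add_const (2 : ℝ)).const_mul (4 : ℝ)
      have := (h.inv h4y2).const_mul (27 : ℝ)
      simpa [div_eq_mul_inv] using this
    exact (Real.hasDerivAt_log hy.ne').add ((d1.add d2).sub_const (5 / 2))
  rcases eq_or_lt_of_le hx1 with rfl | hx1'
  · simp [Real.log_one]; norm_num
  · set f : ℝ → ℝ := fun y => Real.log y + (1 / (4 * y) + 27 / (4 * (y + 2)) - 5 / 2) with hfdef
    have hcont : ContinuousOn f (Set.Icc x 1) := fun y hy =>
      ((hf y (lt_of_lt_of_le hx0 hy.1)).continuousAt).continuousWithinAt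
    have hdiff : DifferentiableOn ℝ f (interior (Set.Icc x 1)) := by
      rw [interior_Icc]
      exact fun y hy => ((hf y (lt_trans hx0 hy.1)).differentiableAt).differentiableWithinAt
    have hnonpos : ∀ y ∈ interior (Set.Icc x 1), deriv f y ≤ 0 := by
      rw [interior_Icc]
      intro y hy
      have hy0 : 0 < y := lt_trans hx0 hy.1
      rw [(hf y hy0).deriv]
      have hkey : y⁻¹ + (-4 / (4 * y) ^ 2 + 27 * (-4 / (4 * (y + 2)) ^ 2)) =
          (y - 1) ^ 3 / (y ^ 2 * (y + 2) ^ 2) := by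
        field_simp
        ring
      rw [hkey]
      apply div_nonpos_of_nonpos_of_nonneg
      · have : y - 1 ≤ 0 := by linarith [hy.2]
        exact Odd.pow_nonpos ⟨1, by norm_num⟩ this
      · positivity
    have hanti : AntitoneOn f (Set.Icc x 1) :=
      antitoneOn_of_deriv_nonpos (convex_Icc x 1) hcont hdiff hnonpos
    have h10 := hanti (Set.mem_Icc.2 ⟨le_refl x, hx1⟩) (Set.mem_Icc.2 ⟨hx1, le_refl 1⟩) hx1
    have hf1 : f 1 = 0 := by
      simp only [hfdef]
      rw [Real.log_one]
      norm_num
    rw [hf1] at h10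
    simp only [hfdef] at h10
    linarith

/-- The rational-function inequality underlying the constant bound. -/
private lemma key_poly {p : ℝ} (hp0 : 0 < p) (hp1 : p < 1) :
    p * (1 / (4 * p) + 27 / (4 * (p + 2)) - 5 / 2) +
      ((1 - p) + (1 - p) / (2 * p)) * (1 / (4 * (1 - p)) + 27 / (4 * ((1 - p) + 2)) - 5 / 2) ≤
      1.0674 := by
  have h2 : (0 : ℝ) < p + 2 := by linarith
  have h3 : (0 : ℝ) < 3 - p := by linarith
  have h4 : (0 : ℝ) < 1 - p := by linarith
  rw [← sub_nonneg]
  have hid : (1.0674 : ℝ) -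
      (p * (1 / (4 * p) + 27 / (4 * (p + 2)) - 5 / 2) +
        ((1 - p) + (1 - p) / (2 * p)) * (1 / (4 * (1 - p)) + 27 / (4 * ((1 - p) + 2)) - 5 / 2)) =
      (p * (58413 * p ^ 2 - 47163 * p + 9522)) / (5000 * (p * ((p + 2) * (3 - p)))) := by
    have e : (1 - p) + 2 = 3 - p := by ring
    rw [e]
    field_simp
    ring
  rw [hid]
  apply div_nonneg
  · have : 0 ≤ 58413 * p ^ 2 - 47163 * p + 9522 := by
      nlinarith [sq_nonneg (116826 * p - 47163)]
    positivity
  · positivity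

/-- With `C_ub(B,p) = (1/2)·log₂(1+pB)` and
`C_lb(B,p) = max(0, Σ_{j=0}^∞ p(1−p)^j·(1/2)·log₂(1+p(1−p)^j·B) − 1.04 − H(p))`,
where `H(p) = −p·log₂ p − (1−p)·log₂(1−p)`, we have `C_ub − C_lb ≤ 2.58`. -/
theorem capacity_constant_gap (p B : ℝ) (hp0 : 0 < p) (hp1 : p < 1) (hB : 0 < B) :
    (1 / 2) * Real.logb 2 (1 + p * B) -
      max 0
        ((∑' j : ℕ, p * (1 - p) ^ j * ((1 / 2) * Real.logb 2 (1 + p * (1 - p) ^ j * B))) -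
          1.04 - (-(p * Real.logb 2 p) - (1 - p) * Real.logb 2 (1 - p))) ≤
      2.58 := by
  have hq0 : (0 : ℝ) < 1 - p := by linarith
  have hq1 : 1 - p < 1 := by linarith
  have hqn : ‖(1 - p : ℝ)‖ < 1 := by rw [Real.norm_eq_abs, abs_of_pos hq0]; exact hq1
  set L : ℝ := Real.logb 2 (1 + p * B) with hL
  set M : ℝ := Real.logb 2 (1 - p) with hM
  set a : ℕ → ℝ := fun j => p * (1 - p) ^ j * ((1 / 2) * Real.logb 2 (1 + p * (1 - p) ^ j * B))
    with ha
  set b : ℕ → ℝ := fun j => p * (1 - p) ^ j * ((1 / 2) * (L + j * M)) with hb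
  set c : ℕ → ℝ := fun j => p * (1 - p) ^ j * ((1 / 2) * L) with hc
  have hqj : ∀ j : ℕ, (0 : ℝ) < (1 - p) ^ j := fun j => pow_pos hq0 j
  have hqj1 : ∀ j : ℕ, (1 - p) ^ j ≤ 1 := fun j => pow_le_one₀ hq0.le hq1.le
  have hargpos : ∀ j : ℕ, (0 : ℝ) < 1 + p * (1 - p) ^ j * B := fun j => by positivity
  -- pointwise bounds b ≤ a ≤ c
  have hba : ∀ j : ℕ, b j ≤ a j := by
    intro j
    have harg : (1 + p * B) * (1 - p) ^ j ≤ 1 + p * (1 - p) ^ j * B := by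
      nlinarith [hqj j, hqj1 j]
    have hlog : L + (j : ℝ) * M ≤ Real.logb 2 (1 + p * (1 - p) ^ j * B) := by
      have e : L + (j : ℝ) * M = Real.logb 2 ((1 + p * B) * (1 - p) ^ j) := by
        rw [Real.logb_mul (by positivity) (by positivity), Real.logb_pow]
      rw [e]
      exact Real.logb_le_logb_of_le (by norm_num) (by positivity) harg
    have hcoef : (0 : ℝ) ≤ p * (1 - p) ^ j := by positivity
    simp only [hb, ha]
    apply mul_le_mul_of_nonneg_left _ hcoef
    exact mul_le_mul_of_nonneg_left hlog (by norm_num)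
  have hac : ∀ j : ℕ, a j ≤ c j := by
    intro j
    have harg : 1 + p * (1 - p) ^ j * B ≤ 1 + p * B := by
      nlinarith [mul_le_mul_of_nonneg_right (mul_le_mul_of_nonneg_left (hqj1 j) hp0.le) hB.le]
    have hlog : Real.logb 2 (1 + p * (1 - p) ^ j * B) ≤ L :=
      Real.logb_le_logb_of_le (by norm_num) (hargpos j) harg
    have hcoef : (0 : ℝ) ≤ p * (1 - p) ^ j := by positivity
    simp only [ha, hc]
    apply mul_le_mul_of_nonneg_left _ hcoef
    exact mul_le_mul_of_nonneg_left hlog (by norm_num)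
  -- summability
  have hgeo : Summable (fun j : ℕ => (1 - p) ^ j) := summable_geometric_of_lt_one hq0.le hq1
  have hjgeo : Summable (fun j : ℕ => (j : ℝ) * (1 - p) ^ j) := by
    simpa using summable_pow_mul_geometric_of_norm_lt_one 1 hqn
  have hsc : Summable c :=
    (hgeo.mul_left (p * ((1 / 2) * L))).congr (fun j => by simp only [hc]; ring)
  have hsb : Summable b := by
    refine ((hgeo.mul_left (p * ((1 / 2) * L))).add
      (hjgeo.mul_left (p * ((1 / 2) * M)))).congr (fun j => ?_)
    simp only [hb]; ring
  have hsd : Summable (fun j => a j - b j) := by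
    apply Summable.of_nonneg_of_le (fun j => sub_nonneg.2 (hba j))
      (fun j => sub_le_sub_right (hac j) (b j)) (hsc.sub hsb)
  have hsa : Summable a := (hsb.add hsd).congr (fun j => by ring)
  -- tsum lower bound
  have htb : ∑' j : ℕ, b j = (1 / 2) * L + ((1 / 2) * M) * ((1 - p) / p) := by
    have e1 : ∀ j : ℕ, b j =
        (p * ((1 / 2) * L)) * (1 - p) ^ j + (p * ((1 / 2) * M)) * ((j : ℝ) * (1 - p) ^ j) :=
      fun j => by simp only [hb]; ring
    rw [tsum_congr e1, Summable.tsum_add (hgeo.mul_left _) (hjgeo.mul_left _), tsum_mul_left,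
      tsum_mul_left, tsum_geometric_of_lt_one hq0.le hq1,
      tsum_coe_mul_geometric_of_norm_lt_one hqn]
    have e2 : (1 : ℝ) - (1 - p) = p := by ring
    rw [e2]
    field_simp
  have hS : (1 / 2) * L + ((1 / 2) * M) * ((1 - p) / p) ≤ ∑' j : ℕ, a j := by
    rw [← htb]; exact Summable.tsum_le_tsum hba hsb hsa
  -- entropy part
  have hl2 : (0.6931471803 : ℝ) < Real.log 2 := Real.log_two_gt_d9
  have hl2pos : (0 : ℝ) < Real.log 2 := by linarith
  have hnum : p * (-Real.log p) + ((1 - p) + (1 - p) / (2 * p)) * (-Real.log (1 - p)) ≤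
      1.0674 := by
    have hA := pade_log hp0 hp1.le
    have hBq := pade_log hq0 (by linarith : (1 : ℝ) - p ≤ 1)
    have hc2 : (0 : ℝ) ≤ (1 - p) + (1 - p) / (2 * p) := by positivity
    have h1 := mul_le_mul_of_nonneg_left hA hp0.le
    have h2 := mul_le_mul_of_nonneg_left hBq hc2
    have := key_poly hp0 hp1
    linarith
  have hH : -((1 / 2) * M) * ((1 - p) / p) +
      (-(p * Real.logb 2 p) - (1 - p) * Real.logb 2 (1 - p)) ≤ 1.54 := by
    have e : -((1 / 2) * M) * ((1 - p) / p) +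
        (-(p * Real.logb 2 p) - (1 - p) * Real.logb 2 (1 - p)) =
        (p * (-Real.log p) + ((1 - p) + (1 - p) / (2 * p)) * (-Real.log (1 - p))) /
          Real.log 2 := by
      simp only [hM, Real.logb]
      field_simp
      ring
    rw [e, div_le_iff₀ hl2pos]
    nlinarith
  -- conclusion
  have hmax : (∑' j : ℕ, a j) - 1.04 -
      (-(p * Real.logb 2 p) - (1 - p) * Real.logb 2 (1 - p)) ≤
      max 0 ((∑' j : ℕ, a j) - 1.04 -
        (-(p * Real.logb 2 p) - (1 - p) * Real.logb 2 (1 - p))) := le_max_right _ _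
  linarith
end

section
/- Let 0 ≤ A₁ < A₂ and let F be the cumulative distribution function of the uniform distribution on [A₁, A₂], i.e. F(x) = 0 for x < A₁, F(x) = (x − A₁)/(A₂ − A₁) for A₁ ≤ x ≤ A₂, and F(x) = 1 for x > A₂. Then for every B with A₁ ≤ B < (A₁ + A₂)/2: ∫₀^B (1 − F(y)) dy ≤ 2 · B · (1 − F(B)). -/
/-- For the cdf `F` of the uniform distribution on `[A₁, A₂]`
(`0 ≤ A₁ < A₂`) and any `B` with `A₁ ≤ B < (A₁+A₂)/2`:
`∫₀^B (1 − F(y)) dy ≤ 2·B·(1 − F(B))`. -/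
theorem uniform_cdf_small_battery (A₁ A₂ : ℝ) (hA₁ : 0 ≤ A₁) (hA : A₁ < A₂)
    (F : ℝ → ℝ)
    (hF : ∀ x, F x =
      if x < A₁ then 0 else if x ≤ A₂ then (x - A₁) / (A₂ - A₁) else 1)
    (B : ℝ) (hB₁ : A₁ ≤ B) (hB₂ : B < (A₁ + A₂) / 2) :
    (∫ y in (0 : ℝ)..B, (1 - F y)) ≤ 2 * B * (1 - F B) := by
  have hd : (0:ℝ) < A₂ - A₁ := by linarith
  have hBA₂ : B < A₂ := by linarith
  have hB0 : 0 ≤ B := le_trans hA₁ hB₁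
  set d := A₂ - A₁ with hdeq
  set g : ℝ → ℝ := fun y => min 1 ((A₂ - y) / d) with hg
  have hgcont : Continuous g := by
    apply Continuous.min continuous_const
    exact (continuous_const.sub continuous_id).div_const d
  have hFB : F B = (B - A₁) / d := by
    rw [hF]
    rw [if_neg (by linarith), if_pos (le_of_lt hBA₂)]
  have hcongr : (∫ y in (0:ℝ)..B, (1 - F y)) = ∫ y in (0:ℝ)..B, g y := by
    apply intervalIntegral.integral_congr
    intro y hy
    rw [Set.uIcc_of_le hB0] at hy
    obtain ⟨hy0, hyB⟩ := hy
    show 1 - F y = g y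
    rw [hF]
    by_cases h1 : y < A₁
    · rw [if_pos h1, hg]
      simp only [sub_zero]
      rw [min_eq_left]
      rw [le_div_iff₀ hd]
      nlinarith
    · rw [if_neg h1, if_pos (by linarith : y ≤ A₂), hg]
      simp only
      rw [min_eq_right]
      · field_simp
        linarith [hdeq]
      · rw [div_le_one hd]
        linarith [not_lt.mp h1]
  have hsplit : (∫ y in (0:ℝ)..B, g y) =
      (∫ y in (0:ℝ)..A₁, g y) + ∫ y in A₁..B, g y := by
    rw [intervalIntegral.integral_add_adjacent_intervals] <;>
      exact (hgcont.intervalIntegrable _ _)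
  have h1 : (∫ y in (0:ℝ)..A₁, g y) = A₁ := by
    have : (∫ y in (0:ℝ)..A₁, g y) = ∫ y in (0:ℝ)..A₁, (1:ℝ) := by
      apply intervalIntegral.integral_congr
      intro y hy
      rw [Set.uIcc_of_le hA₁] at hy
      rw [hg]
      simp only
      rw [min_eq_left]
      rw [le_div_iff₀ hd]
      nlinarith [hy.1, hy.2]
    rw [this, intervalIntegral.integral_const]
    simp
  have h2 : (∫ y in A₁..B, g y) = (B - A₁) - (B - A₁)^2 / (2 * d) := by
    have : (∫ y in A₁..B, g y) = ∫ y in A₁..B, ((A₂ - y) / d) := by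
      apply intervalIntegral.integral_congr
      intro y hy
      rw [Set.uIcc_of_le hB₁] at hy
      rw [hg]
      simp only
      rw [min_eq_right]
      rw [div_le_one hd]
      linarith [hy.1, hy.2]
    rw [this]
    rw [intervalIntegral.integral_div]
    rw [intervalIntegral.integral_sub intervalIntegrable_const
      intervalIntegral.intervalIntegrable_id]
    rw [intervalIntegral.integral_const]
    have hid : (∫ x in A₁..B, (x:ℝ)) = (B ^ 2 - A₁ ^ 2) / 2 := by
      open intervalIntegral in rw [integral_id]
    rw [hid]
    field_simp
    ring
  rw [hcongr, hsplit, h1, h2, hFB]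
  have h2d : (0:ℝ) < 2 * d := by linarith
  have hr : 2 * B * (1 - (B - A₁) / d) = (4 * B * (A₂ - B)) / (2 * d) := by
    rw [hdeq]; field_simp [(by linarith : A₂ - A₁ ≠ 0)]; ring
  rw [hr]
  have hl : A₁ + (B - A₁ - (B - A₁) ^ 2 / (2 * d)) = B - (B - A₁) ^ 2 / (2 * d) := by ring
  rw [hl, sub_le_iff_le_add, ← add_div, le_div_iff₀ h2d]
  nlinarith [sq_nonneg (B - A₁), hdeq, mul_nonneg hB0 (by linarith : (0:ℝ) ≤ A₁ + A₂ - 2 * B)]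
end

section
/- For each real n > 1, define F_n : ℝ → ℝ by 1 − F_n(x) = 1 for x < 1, 1 − F_n(x) = 1/x for 1 ≤ x < n, and 1 − F_n(x) = 0 for x ≥ n. Then ∫₀^n (1 − F_n(y)) dy = 1 + ln n, sup_{0 ≤ x ≤ n} x·(1 − F_n(x)) = 1, and hence (1 + ∫₀^n (1 − F_n(y)) dy) / (1 + sup_{0 ≤ x ≤ n} x·(1 − F_n(x))) = 1 + (ln n)/2, which tends to infinity as n → ∞. -/
noncomputable def counterCdf (n : ℝ) (x : ℝ) : ℝ :=
  if x < 1 then 0 else if x < n then 1 - 1 / x else 1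

lemma counter_integral (n : ℝ) (hn : 1 < n) :
    (∫ y in (0 : ℝ)..n, (1 - counterCdf n y)) = 1 + Real.log n := by
  have hg : (∫ y in (0 : ℝ)..n, (1 - counterCdf n y)) =
      ∫ y in (0 : ℝ)..n, (if y ≤ 1 then (1:ℝ) else 1 / y) := by
    apply intervalIntegral.integral_congr_ae
    filter_upwards [Set.Countable.ae_notMem (Set.countable_singleton n) MeasureTheory.volume]
      with y hy hmem
    simp only [Set.mem_singleton_iff] at hy
    rw [Set.uIoc_of_le (by linarith : (0:ℝ) ≤ n)] at hmem
    rcases lt_trichotomy y 1 with h | h | h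
    · simp [counterCdf, h, le_of_lt h]
    · subst h; simp [counterCdf, hn]
    · have hyn : y < n := lt_of_le_of_ne hmem.2 hy
      simp [counterCdf, not_lt.mpr (le_of_lt h), hyn, not_le.mpr h]
  rw [hg]
  have h1 : IntervalIntegrable (fun y : ℝ => if y ≤ 1 then (1:ℝ) else 1 / y)
      MeasureTheory.volume 0 1 := by
    apply (intervalIntegrable_const (c := (1:ℝ))).congr
    intro y hy
    rw [Set.uIoc_of_le (by norm_num : (0:ℝ) ≤ 1)] at hy
    simp [hy.2]
  have h2 : IntervalIntegrable (fun y : ℝ => if y ≤ 1 then (1:ℝ) else 1 / y)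
      MeasureTheory.volume 1 n := by
    have hc : IntervalIntegrable (fun y : ℝ => 1 / y) MeasureTheory.volume 1 n := by
      apply ContinuousOn.intervalIntegrable
      apply ContinuousOn.div continuousOn_const continuousOn_id
      intro x hx
      rw [Set.uIcc_of_le (le_of_lt hn)] at hx
      intro h; simp only [id_eq] at h; rw [h] at hx; exact absurd hx.1 (by norm_num)
    apply hc.congr
    intro y hy
    rw [Set.uIoc_of_le (le_of_lt hn)] at hy
    simp [not_le.mpr hy.1]
  rw [← intervalIntegral.integral_add_adjacent_intervals h1 h2]
  have e1 : (∫ y in (0:ℝ)..1, (if y ≤ 1 then (1:ℝ) else 1 / y)) = 1 := by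
    rw [intervalIntegral.integral_congr (g := fun _ => (1:ℝ))]
    · simp
    · intro y hy
      rw [Set.uIcc_of_le (by norm_num : (0:ℝ) ≤ 1)] at hy
      simp [hy.2]
  have e2 : (∫ y in (1:ℝ)..n, (if y ≤ 1 then (1:ℝ) else 1 / y)) = Real.log n := by
    rw [intervalIntegral.integral_congr (g := fun y => 1 / y)]
    · rw [integral_one_div]
      · simp
      · rw [Set.uIcc_of_le (le_of_lt hn)]
        intro h; exact absurd h.1 (by norm_num)
    · intro y hy
      rw [Set.uIcc_of_le (le_of_lt hn)] at hy
      rcases eq_or_lt_of_le hy.1 with h | h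
      · simp [← h]
      · simp [not_le.mpr h]
  rw [e1, e2]

lemma counter_bound (n : ℝ) (_hn : 1 < n) (x : ℝ) (_hx : x ∈ Set.Icc (0:ℝ) n) :
    x * (1 - counterCdf n x) ≤ 1 := by
  unfold counterCdf
  split_ifs with h1 h2
  · nlinarith [_hx.1]
  · have hx1 : (1:ℝ) ≤ x := not_lt.mp h1
    have : x * (1 - (1 - 1/x)) = 1 := by field_simp; ring
    linarith [this]
  · simp

lemma counter_sup (n : ℝ) (hn : 1 < n) :
    (⨆ x ∈ Set.Icc (0 : ℝ) n, x * (1 - counterCdf n x)) = 1 := by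
  apply le_antisymm
  · apply Real.iSup_le _ zero_le_one
    intro x
    exact Real.iSup_le (fun hx => counter_bound n hn x hx) zero_le_one
  · have hbdd : BddAbove (Set.range fun x => ⨆ _ : x ∈ Set.Icc (0:ℝ) n,
        x * (1 - counterCdf n x)) := by
      refine ⟨1, ?_⟩
      rintro _ ⟨x, rfl⟩
      exact Real.iSup_le (fun hx => counter_bound n hn x hx) zero_le_one
    have h1 : (1:ℝ) ∈ Set.Icc (0:ℝ) n := ⟨zero_le_one, le_of_lt hn⟩
    have := le_ciSup hbdd 1
    rw [ciSup_pos h1] at this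
    refine le_trans ?_ this
    simp [counterCdf, hn]

/-- For each `n > 1`, `∫₀^n (1 − F_n(y)) dy = 1 + ln n`,
`sup_{0 ≤ x ≤ n} x·(1 − F_n(x)) = 1`, hence the ratio
`(1 + ∫₀^n (1 − F_n))/(1 + sup_{0 ≤ x ≤ n} x(1 − F_n(x))) = 1 + (ln n)/2`,
which tends to infinity as `n → ∞`. -/
theorem continuous_counterexample :
    (∀ n : ℝ, 1 < n →
      (∫ y in (0 : ℝ)..n, (1 - counterCdf n y)) = 1 + Real.log n ∧
      (⨆ x ∈ Set.Icc (0 : ℝ) n, x * (1 - counterCdf n x)) = 1 ∧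
      (1 + ∫ y in (0 : ℝ)..n, (1 - counterCdf n y)) /
          (1 + ⨆ x ∈ Set.Icc (0 : ℝ) n, x * (1 - counterCdf n x)) =
        1 + Real.log n / 2) ∧
    Filter.Tendsto (fun n : ℝ =>
        (1 + ∫ y in (0 : ℝ)..n, (1 - counterCdf n y)) /
          (1 + ⨆ x ∈ Set.Icc (0 : ℝ) n, x * (1 - counterCdf n x)))
      Filter.atTop Filter.atTop := by
  have key : ∀ n : ℝ, 1 < n →
      (∫ y in (0 : ℝ)..n, (1 - counterCdf n y)) = 1 + Real.log n ∧
      (⨆ x ∈ Set.Icc (0 : ℝ) n, x * (1 - counterCdf n x)) = 1 ∧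
      (1 + ∫ y in (0 : ℝ)..n, (1 - counterCdf n y)) /
          (1 + ⨆ x ∈ Set.Icc (0 : ℝ) n, x * (1 - counterCdf n x)) =
        1 + Real.log n / 2 := by
    intro n hn
    refine ⟨counter_integral n hn, counter_sup n hn, ?_⟩
    rw [counter_integral n hn, counter_sup n hn]
    ring
  refine ⟨key, ?_⟩
  apply Filter.Tendsto.congr' (f₁ := fun n : ℝ => 1 + Real.log n / 2)
  · filter_upwards [Filter.eventually_gt_atTop (1:ℝ)] with n hn
    exact ((key n hn).2.2).symm
  · exact Filter.tendsto_atTop_add_const_left _ _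
      (Real.tendsto_log_atTop.atTop_div_const (by norm_num))
end

section
/- Let k ≥ 1 be an integer and consider the discrete distribution on {1, 2, …, k} with ℙ(X = i) = 1/i − 1/(i+1) for 1 ≤ i ≤ k−1 and ℙ(X = k) = 1/k, so that ℙ(X ≥ i) = 1/i for 1 ≤ i ≤ k and its cdf F_k satisfies 1 − F_k(y) = 1/i for y ∈ [i−1, i), 1 ≤ i ≤ k, and 1 − F_k(y) = 0 for y ≥ k. Then ∫₀^k (1 − F_k(y)) dy = Σ_{i=1}^k 1/i, max_{1 ≤ i ≤ k} i · ℙ(X ≥ i) = 1, and hence (1 + ∫₀^k (1 − F_k(y)) dy) / (1 + max_{1 ≤ i ≤ k} i · ℙ(X ≥ i)) = (1 + Σ_{i=1}^k 1/i)/2 ≥ (1 + ln(k+1))/2, which tends to infinity as k → ∞. -/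
/-- The cdf `F_k` of the discrete counterexample distribution on `{1, …, k}`:
`1 − F_k(y) = 1/i` for `y ∈ [i−1, i)`, `1 ≤ i ≤ k` (so `1 − F_k(y) = 1/(⌊y⌋+1)`
for `0 ≤ y < k`), and `1 − F_k(y) = 0` for `y ≥ k`. -/
noncomputable def discreteCounterCdf (k : ℕ) (y : ℝ) : ℝ :=
  if y < 0 then 0 else if y < k then 1 - 1 / ((⌊y⌋₊ : ℝ) + 1) else 1

/-- The probability mass function: `ℙ(X = i) = 1/i − 1/(i+1)` for `1 ≤ i ≤ k−1`
and `ℙ(X = k) = 1/k`. -/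
noncomputable def discreteCounterPmf (k : ℕ) (i : ℕ) : ℝ :=
  if i = k then 1 / k else 1 / i - 1 / (i + 1)

open MeasureTheory

private lemma telescope' (g : ℕ → ℝ) (i k : ℕ) (h : i ≤ k) :
    ∑ j ∈ Finset.Ico i k, (g j - g (j+1)) = g i - g k := by
  induction k, h using Nat.le_induction with
  | base => simp
  | succ n hn ih =>
      rw [Finset.sum_Ico_succ_top (by omega), ih]; ring

private lemma tail_sum' (k i : ℕ) (h2 : i ≤ k) :
    ∑ j ∈ Finset.Icc i k, discreteCounterPmf k j = 1 / (i : ℝ) := by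
  rw [← Finset.Ico_insert_right h2, Finset.sum_insert (by simp)]
  have h3 : ∑ j ∈ Finset.Ico i k, discreteCounterPmf k j
      = ∑ j ∈ Finset.Ico i k, (1 / (j : ℝ) - 1 / ((j : ℝ) + 1)) := by
    refine Finset.sum_congr rfl fun j hj => ?_
    simp only [Finset.mem_Ico] at hj
    simp [discreteCounterPmf, Nat.ne_of_lt hj.2]
  have h4 := telescope' (fun j => 1 / (j : ℝ)) i k h2
  simp only [Nat.cast_add, Nat.cast_one] at h4
  rw [h3, h4, discreteCounterPmf]
  simp

private lemma piece_ae' (k n : ℕ) (hn : n < k) :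
    (fun y => 1 - discreteCounterCdf k y)
      =ᵐ[volume.restrict (Set.Ioc (n : ℝ) ((n : ℝ) + 1))]
    fun _ => 1 / ((n : ℝ) + 1) := by
  rw [← Measure.restrict_congr_set Ioo_ae_eq_Ioc]
  filter_upwards [ae_restrict_mem measurableSet_Ioo] with y hy
  obtain ⟨hy1, hy2⟩ := hy
  have h0 : (0:ℝ) ≤ y := le_trans (Nat.cast_nonneg n) hy1.le
  have hyk : y < k := by
    have : ((n:ℝ) + 1) ≤ k := by exact_mod_cast Nat.succ_le_of_lt hn
    linarith
  have hfl : ⌊y⌋₊ = n := by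
    rw [Nat.floor_eq_iff h0]
    exact ⟨hy1.le, by exact_mod_cast hy2⟩
  simp [discreteCounterCdf, not_lt.mpr h0, hyk, hfl]

private lemma piece_integrable' (k n : ℕ) (hn : n < k) :
    IntervalIntegrable (fun y => 1 - discreteCounterCdf k y) volume (n : ℝ) ((n : ℝ) + 1) := by
  rw [intervalIntegrable_iff, Set.uIoc_of_le (by linarith)]
  exact ((integrableOn_const_iff).mpr (Or.inr measure_Ioc_lt_top)).congr_fun_ae (piece_ae' k n hn).symm

private lemma piece_integral' (k n : ℕ) (hn : n < k) :
    ∫ y in (n : ℝ)..((n : ℝ) + 1), (1 - discreteCounterCdf k y) = 1 / ((n : ℝ) + 1) := by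
  rw [intervalIntegral.integral_of_le (by linarith), integral_congr_ae (piece_ae' k n hn)]
  simp [Real.volume_Ioc]

private lemma integral_eq' (k : ℕ) :
    (∫ y in (0 : ℝ)..(k : ℝ), (1 - discreteCounterCdf k y)) =
      ∑ i ∈ Finset.Icc 1 k, (1 / (i : ℝ)) := by
  have key := intervalIntegral.sum_integral_adjacent_intervals
    (a := fun n : ℕ => (n : ℝ)) (μ := volume)
    (f := fun y => 1 - discreteCounterCdf k y) (n := k)
    (fun n hn => by
      have := piece_integrable' k n hn
      simpa using this)
  simp only [Nat.cast_zero] at key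
  rw [← key]
  rw [show Finset.Icc 1 k = Finset.Ico 1 (k+1) by rfl, Finset.sum_Ico_eq_sum_range]
  simp only [Nat.add_sub_cancel]
  refine Finset.sum_congr rfl fun n hn => ?_
  have := piece_integral' k n (by simpa [Finset.mem_range] using hn)
  rw [show ((n + 1 : ℕ) : ℝ) = (n:ℝ) + 1 by push_cast; ring, this]
  push_cast; ring

private lemma sup_eq' (k : ℕ) (hk : 1 ≤ k) :
    (⨆ i ∈ Finset.Icc 1 k, (i : ℝ) * ∑ j ∈ Finset.Icc i k, discreteCounterPmf k j) = 1 := by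
  have hval : ∀ i ∈ Finset.Icc 1 k,
      (i : ℝ) * ∑ j ∈ Finset.Icc i k, discreteCounterPmf k j = 1 := fun i hi => by
    obtain ⟨h1, h2⟩ := Finset.mem_Icc.mp hi
    rw [tail_sum' k i h2]
    have : (i : ℝ) ≠ 0 := Nat.cast_ne_zero.mpr (by omega)
    field_simp
  set f : ℕ → ℝ := fun i =>
    ⨆ _ : i ∈ Finset.Icc 1 k, (i : ℝ) * ∑ j ∈ Finset.Icc i k, discreteCounterPmf k j with hf
  have hle : ∀ i, f i ≤ 1 := fun i => by
    by_cases hi : i ∈ Finset.Icc 1 k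
    · rw [hf]; dsimp only; rw [ciSup_pos hi, hval i hi]
    · rw [hf]; dsimp only
      haveI : IsEmpty (i ∈ Finset.Icc 1 k) := isEmpty_Prop.mpr hi
      rw [Real.iSup_of_isEmpty]; norm_num
  have h1 : 1 ∈ Finset.Icc 1 k := Finset.mem_Icc.mpr ⟨le_refl 1, hk⟩
  refine le_antisymm (ciSup_le hle) ?_
  calc (1:ℝ) = f 1 := by rw [hf]; dsimp only; rw [ciSup_pos h1, hval 1 h1]
    _ ≤ ⨆ i, f i := le_ciSup ⟨1, by rintro x ⟨i, rfl⟩; exact hle i⟩ 1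

private lemma log_le_harm' (k : ℕ) :
    Real.log ((k : ℝ) + 1) ≤ ∑ i ∈ Finset.Icc 1 k, (1 / (i : ℝ)) := by
  have h := log_add_one_le_harmonic k
  have he : ((harmonic k : ℚ) : ℝ) = ∑ i ∈ Finset.Icc 1 k, (1 / (i : ℝ)) := by
    rw [harmonic_eq_sum_Icc]
    push_cast
    simp [one_div]
  rw [he] at h
  refine le_trans (le_of_eq ?_) h
  push_cast; ring_nf

/-- For the discrete distribution with `ℙ(X = i) = 1/i − 1/(i+1)`
(`1 ≤ i ≤ k−1`), `ℙ(X = k) = 1/k`: the tail probabilities satisfy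
`ℙ(X ≥ i) = 1/i`, `∫₀^k (1 − F_k(y)) dy = Σ_{i=1}^k 1/i`,
`max_{1 ≤ i ≤ k} i·ℙ(X ≥ i) = 1`, hence the ratio equals `(1 + Σ_{i=1}^k 1/i)/2`,
which is at least `(1 + ln(k+1))/2` and tends to infinity as `k → ∞`. -/
theorem discrete_counterexample :
    (∀ k : ℕ, 1 ≤ k →
      (∀ i ∈ Finset.Icc 1 k, ∑ j ∈ Finset.Icc i k, discreteCounterPmf k j = 1 / (i : ℝ)) ∧
      (∫ y in (0 : ℝ)..(k : ℝ), (1 - discreteCounterCdf k y)) =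
        ∑ i ∈ Finset.Icc 1 k, (1 / (i : ℝ)) ∧
      (⨆ i ∈ Finset.Icc 1 k, (i : ℝ) * ∑ j ∈ Finset.Icc i k, discreteCounterPmf k j) = 1 ∧
      (1 + ∫ y in (0 : ℝ)..(k : ℝ), (1 - discreteCounterCdf k y)) /
          (1 + ⨆ i ∈ Finset.Icc 1 k, (i : ℝ) * ∑ j ∈ Finset.Icc i k, discreteCounterPmf k j) =
        (1 + ∑ i ∈ Finset.Icc 1 k, (1 / (i : ℝ))) / 2 ∧
      (1 + ∑ i ∈ Finset.Icc 1 k, (1 / (i : ℝ))) / 2 ≥ (1 + Real.log ((k : ℝ) + 1)) / 2) ∧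
    Filter.Tendsto (fun k : ℕ =>
        (1 + ∫ y in (0 : ℝ)..(k : ℝ), (1 - discreteCounterCdf k y)) /
          (1 + ⨆ i ∈ Finset.Icc 1 k, (i : ℝ) * ∑ j ∈ Finset.Icc i k, discreteCounterPmf k j))
      Filter.atTop Filter.atTop := by
  have main : ∀ k : ℕ, 1 ≤ k →
      (1 + ∫ y in (0 : ℝ)..(k : ℝ), (1 - discreteCounterCdf k y)) /
          (1 + ⨆ i ∈ Finset.Icc 1 k, (i : ℝ) * ∑ j ∈ Finset.Icc i k, discreteCounterPmf k j) =
        (1 + ∑ i ∈ Finset.Icc 1 k, (1 / (i : ℝ))) / 2 := by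
    intro k hk
    rw [integral_eq' k, sup_eq' k hk]
    norm_num
  constructor
  · intro k hk
    refine ⟨fun i hi => tail_sum' k i (Finset.mem_Icc.mp hi).2, integral_eq' k, sup_eq' k hk,
      main k hk, ?_⟩
    have := log_le_harm' k
    linarith
  · have hlog : Filter.Tendsto (fun k : ℕ => (1 + Real.log ((k : ℝ) + 1)) / 2)
        Filter.atTop Filter.atTop := by
      refine Filter.Tendsto.atTop_div_const (by norm_num) ?_
      refine Filter.tendsto_atTop_add_const_left _ 1 ?_
      exact Real.tendsto_log_atTop.comp
        (Filter.tendsto_atTop_add_const_right _ 1 tendsto_natCast_atTop_atTop)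
    refine Filter.tendsto_atTop_mono' _ ?_ hlog
    filter_upwards [Filter.eventually_ge_atTop 1] with k hk
    rw [main k hk]
    have := log_le_harm' k
    linarith
end
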